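/- For every t ∈ ℝ, the determinant of the Gauss map data along the boundary satisfies det(n t, deriv n t, iteratedDeriv 2 n t) = κ2 t · (deriv κ3 t + κ1 t · κ2 t) + κ3 t · (κ1 t · κ3 t − deriv κ2 t). -/

import Mathlib

open scoped RealInnerProductSpace

noncomputable def cross3 (u v : EuclideanSpace ℝ (Fin 3)) : EuclideanSpace ℝ (Fin 3) :=
  (WithLp.equiv 2 (Fin 3 → ℝ)).symm
    ![u 1 * v 2 - u 2 * v 1, u 2 * v 0 - u 0 * v 2, u 0 * v 1 - u 1 * v 0]

noncomputable def det3 (u v w : EuclideanSpace ℝ (Fin 3)) : ℝ :=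
  Matrix.det (Matrix.of (fun i j => ![u, v, w] j i))

theorem stmt7
    (γ e1 e2 e3 : ℝ → EuclideanSpace ℝ (Fin 3)) (κ1 κ2 κ3 : ℝ → ℝ)
    (hγ : ContDiff ℝ (⊤ : ℕ∞) γ)
    (he1s : ContDiff ℝ (⊤ : ℕ∞) e1) (he2s : ContDiff ℝ (⊤ : ℕ∞) e2)
    (he3s : ContDiff ℝ (⊤ : ℕ∞) e3)
    (hκ1s : ContDiff ℝ (⊤ : ℕ∞) κ1) (hκ2s : ContDiff ℝ (⊤ : ℕ∞) κ2)
    (hκ3s : ContDiff ℝ (⊤ : ℕ∞) κ3)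
    (he1 : e1 = deriv γ)
    (hON : ∀ t, Orthonormal ℝ ![e1 t, e2 t, e3 t])
    (hor : ∀ t, e3 t = cross3 (e1 t) (e2 t))
    (hE1 : ∀ t, deriv e1 t = κ1 t • e2 t + κ2 t • e3 t)
    (hE2 : ∀ t, deriv e2 t = (-(κ1 t)) • e1 t + κ3 t • e3 t)
    (hE3 : ∀ t, deriv e3 t = (-(κ2 t)) • e1 t - κ3 t • e2 t)
    :
    ∀ t : ℝ, det3 (e3 t) (deriv e3 t) (iteratedDeriv 2 e3 t)
      = κ2 t * (deriv κ3 t + κ1 t * κ2 t) + κ3 t * (κ1 t * κ3 t - deriv κ2 t) := by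
  intro t
  have hde3 : deriv e3 = fun s => (-(κ2 s)) • e1 s - κ3 s • e2 s := funext fun s => hE3 s
  have hκ2' : HasDerivAt κ2 (deriv κ2 t) t := (hκ2s.differentiable (by norm_num) t).hasDerivAt
  have hκ3' : HasDerivAt κ3 (deriv κ3 t) t := (hκ3s.differentiable (by norm_num) t).hasDerivAt
  have he1' : HasDerivAt e1 (deriv e1 t) t := (he1s.differentiable (by norm_num) t).hasDerivAt
  have he2' : HasDerivAt e2 (deriv e2 t) t := (he2s.differentiable (by norm_num) t).hasDerivAt
  have hD : HasDerivAt (fun s => (-(κ2 s)) • e1 s - κ3 s • e2 s)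
      (((-(κ2 t)) • deriv e1 t + (-(deriv κ2 t)) • e1 t)
        - (κ3 t • deriv e2 t + deriv κ3 t • e2 t)) t :=
    (hκ2'.neg.smul he1').sub (hκ3'.smul he2')
  have h2 : iteratedDeriv 2 e3 t
      = ((-(κ2 t)) • deriv e1 t + (-(deriv κ2 t)) • e1 t)
        - (κ3 t • deriv e2 t + deriv κ3 t • e2 t) := by
    rw [show (2:ℕ) = 1 + 1 from rfl, iteratedDeriv_succ, iteratedDeriv_one, hde3]
    exact hD.deriv
  rw [h2, hE3 t, hE1 t, hE2 t, hor t]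
  have h := hON t
  rw [orthonormal_iff_ite] at h
  have h11 := h 0 0; have h22 := h 1 1; have h12 := h 0 1
  simp [PiLp.inner_apply, Fin.sum_univ_three, -inner_self_eq_norm_sq_to_K] at h11 h22 h12
  simp only [det3, Matrix.det_fin_three, Matrix.of_apply, Matrix.cons_val_zero,
    Matrix.cons_val_one, Matrix.head_cons, Matrix.cons_val_two, Matrix.tail_cons,
    PiLp.add_apply, PiLp.sub_apply, PiLp.smul_apply, smul_eq_mul, cross3,
    WithLp.equiv_symm_apply, PiLp.toLp_apply, Matrix.cons_val_fin_one]
  set x0 := e1 t 0; set x1 := e1 t 1; set x2 := e1 t 2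
  set y0 := e2 t 0; set y1 := e2 t 1; set y2 := e2 t 2
  set C := κ2 t * (deriv κ3 t + κ1 t * κ2 t) + κ3 t * (κ1 t * κ3 t - deriv κ2 t) with hC
  linear_combination (C * (y0*y0+y1*y1+y2*y2)) * h11 + C * h22
    - (C * (x0*y0+x1*y1+x2*y2)) * h12
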